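/- Let k > 0, 0 ≤ c < 2√k, ω_d = √(k − c²/4), T̄ > 0, d(t) = e^{−ct/2} cos(ω_d t), s(t) = (1/ω_d) e^{−ct/2} sin(ω_d t), and let F : [0, T̄] → ℝ be continuous. Then the value at the endpoint of x(t) = d(t)∫₀ᵗ F(τ)(d(τ) − (c/2)s(τ)) dτ + s(t)∫₀ᵗ F(τ)((c/2)d(τ) + ω_d² s(τ)) dτ satisfies |x(T̄)| ≤ e^{−cT̄/2} · ‖F‖_{L²(0,T̄)} · ( ‖d − (c/2)s‖²_{L²(0,T̄)} + ‖(c/(2ω_d))d + ω_d s‖²_{L²(0,T̄)} )^{1/2}, where ‖g‖_{L²(0,T̄)} = (∫₀^{T̄} g(t)² dt)^{1/2}. -/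

import Mathlib

/-- Cauchy–Schwarz for interval integrals of continuous functions. -/
lemma cs_interval (T : ℝ) (hT : 0 ≤ T) (f g : ℝ → ℝ)
    (hf : ContinuousOn f (Set.Icc 0 T)) (hg : ContinuousOn g (Set.Icc 0 T)) :
    (∫ t in (0:ℝ)..T, f t * g t) ^ 2 ≤
      (∫ t in (0:ℝ)..T, f t ^ 2) * (∫ t in (0:ℝ)..T, g t ^ 2) := by
  have huIcc : Set.uIcc (0:ℝ) T = Set.Icc 0 T := Set.uIcc_of_le hT
  have hif : IntervalIntegrable (fun t => f t ^ 2) MeasureTheory.volume 0 T :=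
    ContinuousOn.intervalIntegrable (by rw [huIcc]; exact hf.pow 2)
  have hig : IntervalIntegrable (fun t => g t ^ 2) MeasureTheory.volume 0 T :=
    ContinuousOn.intervalIntegrable (by rw [huIcc]; exact hg.pow 2)
  have hifg : IntervalIntegrable (fun t => f t * g t) MeasureTheory.volume 0 T :=
    ContinuousOn.intervalIntegrable (by rw [huIcc]; exact hf.mul hg)
  set A := ∫ t in (0:ℝ)..T, f t ^ 2 with hA
  set B := ∫ t in (0:ℝ)..T, f t * g t with hB
  set C := ∫ t in (0:ℝ)..T, g t ^ 2 with hC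
  have key : ∀ L : ℝ, 0 ≤ A * (L * L) + (2 * B) * L + C := by
    intro L
    have h1 : (0:ℝ) ≤ ∫ t in (0:ℝ)..T, (L * f t + g t) ^ 2 :=
      intervalIntegral.integral_nonneg hT (fun u _ => sq_nonneg _)
    have h2 : (∫ t in (0:ℝ)..T, (L * f t + g t) ^ 2)
        = L ^ 2 * A + (2 * L) * B + C := by
      have heq : Set.EqOn (fun t => (L * f t + g t) ^ 2)
          (fun t => L ^ 2 * f t ^ 2 + ((2 * L) * (f t * g t) + g t ^ 2))
          (Set.uIcc 0 T) := fun t _ => by ring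
      rw [intervalIntegral.integral_congr heq,
        intervalIntegral.integral_add ((hif.const_mul _))
          ((hifg.const_mul _).add hig),
        intervalIntegral.integral_add (hifg.const_mul _) hig,
        intervalIntegral.integral_const_mul, intervalIntegral.integral_const_mul]
      ring
    nlinarith [h1, h2]
  have hdisc := discrim_le_zero key
  rw [discrim] at hdisc
  nlinarith [hdisc]

/-- Final-displacement bound. For continuous `F` and
`x(t) = d(t)∫₀ᵗ F(d − (c/2)s) + s(t)∫₀ᵗ F((c/2)d + ω_d²s)`,
`|x(T̄)| ≤ e^{-cT̄/2} ‖F‖_{L²(0,T̄)} (‖d − (c/2)s‖²_{L²} + ‖(c/(2ω_d))d + ω_d s‖²_{L²})^{1/2}`. -/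
theorem stmt10 (k c : ℝ) (hk : 0 < k) (hc0 : 0 ≤ c) (hc : c < 2 * Real.sqrt k)
    (ωd : ℝ) (hωd : ωd = Real.sqrt (k - c ^ 2 / 4))
    (T : ℝ) (hT : 0 < T)
    (d s : ℝ → ℝ)
    (hd : d = fun t => Real.exp (-c * t / 2) * Real.cos (ωd * t))
    (hs : s = fun t => (1 / ωd) * Real.exp (-c * t / 2) * Real.sin (ωd * t))
    (F : ℝ → ℝ) (hF : ContinuousOn F (Set.Icc 0 T))
    (x : ℝ → ℝ)
    (hx : x = fun t =>
      d t * (∫ τ in (0:ℝ)..t, F τ * (d τ - (c / 2) * s τ))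
      + s t * ∫ τ in (0:ℝ)..t, F τ * ((c / 2) * d τ + ωd ^ 2 * s τ)) :
    |x T| ≤ Real.exp (-c * T / 2) * Real.sqrt (∫ t in (0:ℝ)..T, F t ^ 2) *
      Real.sqrt
        ((Real.sqrt (∫ t in (0:ℝ)..T, (d t - (c / 2) * s t) ^ 2)) ^ 2 +
         (Real.sqrt (∫ t in (0:ℝ)..T, ((c / (2 * ωd)) * d t + ωd * s t) ^ 2)) ^ 2) := by
  have hk4 : 0 < k - c ^ 2 / 4 := by
    nlinarith [Real.sq_sqrt hk.le, Real.sqrt_nonneg k]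
  have hω : 0 < ωd := hωd ▸ Real.sqrt_pos.mpr hk4
  have hωne : ωd ≠ 0 := ne_of_gt hω
  have hdc : Continuous d := by rw [hd]; fun_prop
  have hsc : Continuous s := by rw [hs]; fun_prop
  set g1 : ℝ → ℝ := fun t => d t - (c / 2) * s t with hg1
  set g2 : ℝ → ℝ := fun t => (c / (2 * ωd)) * d t + ωd * s t with hg2
  have hg1c : ContinuousOn g1 (Set.Icc 0 T) :=
    ((hdc.sub (continuous_const.mul hsc)).continuousOn)
  have hg2c : ContinuousOn g2 (Set.Icc 0 T) :=
    (((continuous_const.mul hdc).add (continuous_const.mul hsc)).continuousOn)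
  -- rewrite the second integrand
  have hrel : Set.EqOn (fun τ => F τ * ((c / 2) * d τ + ωd ^ 2 * s τ))
      (fun τ => ωd * (F τ * g2 τ)) (Set.uIcc 0 T) := by
    intro t _
    simp only [hg2]
    field_simp
  set A := ∫ τ in (0:ℝ)..T, F τ * g1 τ with hAdef
  set Bv := ∫ τ in (0:ℝ)..T, F τ * g2 τ with hBdef
  have hxT : x T = d T * A + (ωd * s T) * Bv := by
    rw [hx]
    simp only
    rw [intervalIntegral.integral_congr hrel, intervalIntegral.integral_const_mul]
    ring
  set E := Real.exp (-c * T / 2) with hE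
  have hE0 : 0 ≤ E := Real.exp_nonneg _
  have energy : d T ^ 2 + (ωd * s T) ^ 2 = E ^ 2 := by
    rw [hd, hs, hE]
    simp only
    have htrig := Real.sin_sq_add_cos_sq (ωd * T)
    field_simp
    nlinarith [htrig, Real.sin_sq_add_cos_sq (T * ωd)]
  have hsq : (x T) ^ 2 ≤ E ^ 2 * (A ^ 2 + Bv ^ 2) := by
    rw [hxT]
    nlinarith [sq_nonneg (d T * Bv - (ωd * s T) * A), energy]
  -- Cauchy–Schwarz bounds
  set IF := ∫ t in (0:ℝ)..T, F t ^ 2 with hIF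
  set I1 := ∫ t in (0:ℝ)..T, g1 t ^ 2 with hI1
  set I2 := ∫ t in (0:ℝ)..T, g2 t ^ 2 with hI2
  have hcs1 : A ^ 2 ≤ IF * I1 := cs_interval T hT.le F g1 hF hg1c
  have hcs2 : Bv ^ 2 ≤ IF * I2 := cs_interval T hT.le F g2 hF hg2c
  have hIFnn : 0 ≤ IF := intervalIntegral.integral_nonneg hT.le (fun u _ => sq_nonneg _)
  have hI1nn : 0 ≤ I1 := intervalIntegral.integral_nonneg hT.le (fun u _ => sq_nonneg _)
  have hI2nn : 0 ≤ I2 := intervalIntegral.integral_nonneg hT.le (fun u _ => sq_nonneg _)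
  -- assemble
  have hxabs : |x T| ≤ E * Real.sqrt (A ^ 2 + Bv ^ 2) := by
    have h1 : |x T| = Real.sqrt ((x T) ^ 2) := (Real.sqrt_sq_eq_abs _).symm
    rw [h1]
    calc Real.sqrt ((x T) ^ 2) ≤ Real.sqrt (E ^ 2 * (A ^ 2 + Bv ^ 2)) :=
          Real.sqrt_le_sqrt hsq
      _ = E * Real.sqrt (A ^ 2 + Bv ^ 2) := by
          rw [Real.sqrt_mul (sq_nonneg _), Real.sqrt_sq hE0]
  have hfinal : Real.sqrt (A ^ 2 + Bv ^ 2) ≤ Real.sqrt IF * Real.sqrt (I1 + I2) := by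
    rw [← Real.sqrt_mul hIFnn]
    apply Real.sqrt_le_sqrt
    nlinarith [hcs1, hcs2]
  have hrhs : Real.sqrt ((Real.sqrt I1) ^ 2 + (Real.sqrt I2) ^ 2)
      = Real.sqrt (I1 + I2) := by
    rw [Real.sq_sqrt hI1nn, Real.sq_sqrt hI2nn]
  calc |x T| ≤ E * Real.sqrt (A ^ 2 + Bv ^ 2) := hxabs
    _ ≤ E * (Real.sqrt IF * Real.sqrt (I1 + I2)) := by
        exact mul_le_mul_of_nonneg_left hfinal hE0
    _ = E * Real.sqrt IF * Real.sqrt ((Real.sqrt I1) ^ 2 + (Real.sqrt I2) ^ 2) := by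
        rw [hrhs]; ring
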